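/- (Margin update, cases m ≤ j ≤ M and j > M) In the setting of the routing achievability proof: with the updates L_M' = L_M - N/(|X_M|-1), C_0' = C_0 - N/(|X_M|-1), C_i' = C_i - C_{iM} for p_i ∈ X_1 \ X_m with Σ C_{iM} = |X_M| N/(|X_M|-1), and C_i' = C_i for p_i ∈ X_m \ {p_0}, the updated margins satisfy: N_j' = N_j - N for all m ≤ j ≤ M, and N_j' = N_j for all j > M. -/

import Mathlib

/-- Margin update for `m ≤ j ≤ M` and for `j > M` in the routing
achievability proof: with the updates `L' M = L M - Nv/(|X M| - 1)`,
`C' p0 = C p0 - Nv/(|X M| - 1)`, `C' p = C p - CM p` for `p ∈ X 1 \ X m`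
(with `∑ CM = |X M| Nv/(|X M| - 1)`) and `C' p = C p` for `p ∈ X m \ {p0}`,
the updated margins satisfy `N' j = N j - Nv` for `m ≤ j ≤ M` and
`N' j = N j` for `M < j ≤ n`. -/
theorem stmt_10 {α : Type*} [DecidableEq α] (n : ℕ) (hn : 1 ≤ n) (p0 : α)
    (X : ℕ → Finset α) (hXtop : X (n + 1) = {p0})
    (hnested : ∀ j, 1 ≤ j → j ≤ n → X (j + 1) ⊆ X j)
    (hp0 : ∀ j, 1 ≤ j → j ≤ n + 1 → p0 ∈ X j)
    (C : α → ℝ) (L : ℕ → ℝ)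
    (N : ℕ → ℝ)
    (hNdef : ∀ j, 1 ≤ j → j ≤ n →
      N j = (∑ i ∈ Finset.Icc j n, ((X i).card : ℝ) * L i)
            + (∑ i ∈ Finset.Icc 1 (j - 1), L i) - ∑ p ∈ X j, C p)
    (m M : ℕ) (hm1 : 1 ≤ m) (hmM : m ≤ M) (hMn : M ≤ n)
    (hcardM : 2 ≤ (X M).card)
    (Nv : ℝ) (hNv : 0 < Nv)
    (CM : α → ℝ) (hCM0 : ∀ p ∈ X 1 \ X m, 0 ≤ CM p)
    (hCMsum : ∑ p ∈ X 1 \ X m, CM p = ((X M).card : ℝ) * Nv / (((X M).card : ℝ) - 1))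
    (C' : α → ℝ) (L' : ℕ → ℝ)
    (hC'p0 : C' p0 = C p0 - Nv / (((X M).card : ℝ) - 1))
    (hC'in : ∀ p ∈ X m, p ≠ p0 → C' p = C p)
    (hC'out : ∀ p ∈ X 1, p ∉ X m → C' p = C p - CM p)
    (hL'M : L' M = L M - Nv / (((X M).card : ℝ) - 1))
    (hL'other : ∀ i, i ≠ M → L' i = L i) :
    (∀ j, m ≤ j → j ≤ M →
      ((∑ i ∈ Finset.Icc j n, ((X i).card : ℝ) * L' i)
        + (∑ i ∈ Finset.Icc 1 (j - 1), L' i) - ∑ p ∈ X j, C' p) = N j - Nv) ∧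
    (∀ j, M < j → j ≤ n →
      ((∑ i ∈ Finset.Icc j n, ((X i).card : ℝ) * L' i)
        + (∑ i ∈ Finset.Icc 1 (j - 1), L' i) - ∑ p ∈ X j, C' p) = N j) := by
  have hd : ((X M).card : ℝ) - 1 ≠ 0 := by
    have h2 : (2:ℝ) ≤ ((X M).card:ℝ) := by exact_mod_cast hcardM
    linarith
  have hsub : ∀ a b, 1 ≤ a → a ≤ b → b ≤ n + 1 → X b ⊆ X a := by
    intro a b ha hab hbn
    induction b with
    | zero => exact absurd hab (by omega)
    | succ k ih =>
      rcases eq_or_lt_of_le hab with heq | hlt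
      · rw [heq]
      · exact (hnested k (by omega) (by omega)).trans (ih (by omega) (by omega))
  have hL'eq : ∀ i, L' i = L i - (if i = M then Nv / (((X M).card:ℝ)-1) else 0) := by
    intro i; by_cases h : i = M
    · subst h; simp [hL'M]
    · simp [h, hL'other i h]
  have hsumC : ∀ j, m ≤ j → j ≤ n → ∑ p ∈ X j, C' p
      = (∑ p ∈ X j, C p) - Nv / (((X M).card:ℝ)-1) := by
    intro j hj1 hjn
    have hp0j : p0 ∈ X j := hp0 j (by omega) (by omega)
    rw [← Finset.add_sum_erase _ C' hp0j, ← Finset.add_sum_erase _ C hp0j, hC'p0]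
    have he : ∑ p ∈ (X j).erase p0, C' p = ∑ p ∈ (X j).erase p0, C p := by
      refine Finset.sum_congr rfl (fun p hp => ?_)
      exact hC'in p (hsub m j hm1 hj1 (by omega) (Finset.mem_of_mem_erase hp))
        (Finset.ne_of_mem_erase hp)
    rw [he]; ring
  have hsumL1 : ∀ s : Finset ℕ, ∑ i ∈ s, ((X i).card:ℝ) * L' i
      = (∑ i ∈ s, ((X i).card:ℝ) * L i)
        - (if M ∈ s then ((X M).card:ℝ) * (Nv / (((X M).card:ℝ)-1)) else 0) := by
    intro s
    simp only [hL'eq, mul_sub, Finset.sum_sub_distrib]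
    congr 1
    simp only [mul_ite, mul_zero]
    exact Finset.sum_ite_eq' s M (fun i => ((X i).card:ℝ) * (Nv / (((X M).card:ℝ)-1)))
  have hsumL2 : ∀ s : Finset ℕ, ∑ i ∈ s, L' i
      = (∑ i ∈ s, L i) - (if M ∈ s then Nv / (((X M).card:ℝ)-1) else 0) := by
    intro s
    simp only [hL'eq, Finset.sum_sub_distrib]
    congr 1
    exact Finset.sum_ite_eq' s M (fun _ => Nv / (((X M).card:ℝ)-1))
  constructor
  · intro j hmj hjM
    have hM1 : M ∈ Finset.Icc j n := Finset.mem_Icc.mpr ⟨hjM, hMn⟩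
    have hM2 : M ∉ Finset.Icc 1 (j - 1) := by
      simp only [Finset.mem_Icc]; omega
    rw [hsumL1, hsumL2, hsumC j hmj (le_trans hjM hMn), if_pos hM1, if_neg hM2,
      hNdef j (by omega) (le_trans hjM hMn)]
    field_simp
    ring
  · intro j hMj hjn
    have hM1 : M ∉ Finset.Icc j n := by simp only [Finset.mem_Icc]; omega
    have hM2 : M ∈ Finset.Icc 1 (j - 1) := Finset.mem_Icc.mpr ⟨by omega, by omega⟩
    rw [hsumL1, hsumL2, hsumC j (by omega) hjn, if_neg hM1, if_pos hM2,
      hNdef j (by omega) hjn]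
    ring
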